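/- Let (w_m)_{m∈ℤ} ∈ ℓ² be the Fourier coefficients of w ∈ L²(Γ_R) and suppose additionally Σ_m (1+m²)^{1/2} |w_m|² < ∞ (i.e., w ∈ H^{1/2}(Γ_R)). Then the DtN series S w = Σ_{m∈ℤ} k (H⁽²⁾_m'(kR)/H⁽²⁾_m(kR)) w_m e^{imθ} converges in H^{−1/2}(Γ_R), i.e., Σ_m (1+m²)^{−1/2} |k (H⁽²⁾_m'(kR)/H⁽²⁾_m(kR))|² |w_m|² < ∞, and S is a bounded linear map from H^{1/2}(Γ_R) to H^{−1/2}(Γ_R). -/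

import Mathlib

open MeasureTheory

/-- Bessel function of the first kind of real order `ν`, via the standard
integral representation (valid for `ρ > 0`). -/
noncomputable def besselJ (ν ρ : ℝ) : ℝ :=
  (1 / Real.pi) * (∫ τ in (0:ℝ)..Real.pi, Real.cos (ν * τ - ρ * Real.sin τ)) -
    (Real.sin (ν * Real.pi) / Real.pi) *
      (∫ t in Set.Ioi (0:ℝ), Real.exp (-(ρ * Real.sinh t) - ν * t))

/-- Bessel function of the second kind of real order `ν`, via the standard
integral representation (valid for `ρ > 0`). -/
noncomputable def besselY (ν ρ : ℝ) : ℝ :=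
  (1 / Real.pi) * (∫ τ in (0:ℝ)..Real.pi, Real.sin (ρ * Real.sin τ - ν * τ)) -
    (1 / Real.pi) *
      (∫ t in Set.Ioi (0:ℝ),
        (Real.exp (ν * t) + Real.exp (-(ν * t)) * Real.cos (ν * Real.pi)) *
          Real.exp (-(ρ * Real.sinh t)))

/-- Hankel function of the second kind `H⁽²⁾_ν(ρ) = J_ν(ρ) − i Y_ν(ρ)`. -/
noncomputable def hankel2 (ν ρ : ℝ) : ℂ :=
  (besselJ ν ρ : ℂ) - Complex.I * (besselY ν ρ : ℂ)

/-- Derivative of the Hankel function of the second kind in its argument. -/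
noncomputable def hankel2' (ν ρ : ℝ) : ℂ := deriv (hankel2 ν) ρ

/-- The DtN multiplier `ζ_m = k H⁽²⁾_m'(kR)/H⁽²⁾_m(kR)`. -/
noncomputable def dtnMult (k R : ℝ) (m : ℤ) : ℂ :=
  (k : ℂ) * (hankel2' (m : ℝ) (k * R) / hankel2 (m : ℝ) (k * R))


section DtNAuxSection
open Real Set MeasureTheory Filter Topology intervalIntegral

lemma key_exp_bound {ρ a : ℝ} (hρ : 0 < ρ) {t : ℝ} (ht : 0 ≤ t) :
    Real.exp (a * t) * Real.cosh t * Real.exp (-(ρ * Real.sinh t)) ≤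
      Real.exp (ρ/2 + 2*(a+2)^2/ρ) * Real.exp (-t) := by
  have hc : Real.cosh t ≤ Real.exp t := by
    rw [Real.cosh_eq]
    have := Real.exp_le_exp.2 (neg_le_self ht)
    linarith
  have hs : (Real.exp t - 1)/2 ≤ Real.sinh t := by
    rw [Real.sinh_eq]
    have : Real.exp (-t) ≤ 1 := by
      rw [← Real.exp_zero]; exact Real.exp_le_exp.2 (by linarith)
    linarith
  have hq : t^2/4 ≤ Real.exp t := by
    have h1 : Real.exp t = Real.exp (t/2) * Real.exp (t/2) := by
      rw [← Real.exp_add]; ring_nf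
    nlinarith [Real.add_one_le_exp (t/2), Real.exp_nonneg (t/2)]
  calc Real.exp (a * t) * Real.cosh t * Real.exp (-(ρ * Real.sinh t))
      ≤ Real.exp (a * t) * Real.exp t * Real.exp (-(ρ * Real.sinh t)) := by
        exact mul_le_mul_of_nonneg_right
          (mul_le_mul_of_nonneg_left hc (Real.exp_nonneg _)) (Real.exp_nonneg _)
    _ = Real.exp (a * t + t + -(ρ * Real.sinh t)) := by
        rw [← Real.exp_add, ← Real.exp_add]
    _ ≤ Real.exp (ρ/2 + 2*(a+2)^2/ρ + -t) := by
        apply Real.exp_le_exp.2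
        have h2 : ρ * ((Real.exp t - 1)/2) ≤ ρ * Real.sinh t :=
          mul_le_mul_of_nonneg_left hs hρ.le
        have h3 : ρ/8 * (t^2/4) ≤ ρ/8 * Real.exp t :=
          mul_le_mul_of_nonneg_left hq (by positivity)
        have key : (a+2)*t - ρ*t^2/8 ≤ 2*(a+2)^2/ρ := by
          rw [le_div_iff₀ hρ]; nlinarith [sq_nonneg (ρ*t - 4*(a+2))]
        linarith
    _ = Real.exp (ρ/2 + 2*(a+2)^2/ρ) * Real.exp (-t) := by
        rw [← Real.exp_add]

lemma integrableOn_master {ρ a : ℝ} (hρ : 0 < ρ) :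
    IntegrableOn (fun t => Real.exp (a * t) * Real.cosh t * Real.exp (-(ρ * Real.sinh t)))
      (Ioi (0:ℝ)) := by
  have hint : IntegrableOn (fun t : ℝ => Real.exp (ρ/2 + 2*(a+2)^2/ρ) * Real.exp (-(1:ℝ) * t))
      (Ioi (0:ℝ)) := (exp_neg_integrableOn_Ioi 0 one_pos).const_mul _
  apply Integrable.mono' hint
  · exact (Continuous.mul ((Real.continuous_exp.comp (continuous_const.mul continuous_id)).mul
      Real.continuous_cosh) (Real.continuous_exp.comp
      (continuous_const.mul Real.continuous_sinh).neg)).aestronglyMeasurable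
  · filter_upwards [ae_restrict_mem measurableSet_Ioi] with t ht
    rw [Real.norm_eq_abs, abs_of_nonneg (by positivity)]
    simpa using key_exp_bound hρ (le_of_lt ht)

lemma integrableOn_of_le_master {ρ a c : ℝ} (hρ : 0 < ρ) {f : ℝ → ℝ}
    (hf : Continuous f)
    (hle : ∀ t, 0 < t →
      |f t| ≤ c * (Real.exp (a * t) * Real.cosh t * Real.exp (-(ρ * Real.sinh t)))) :
    IntegrableOn f (Ioi (0:ℝ)) := by
  apply Integrable.mono' ((integrableOn_master (a := a) hρ).const_mul c) hf.aestronglyMeasurable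
  filter_upwards [ae_restrict_mem measurableSet_Ioi] with t ht
  exact hle t ht

/-- `A ρ a = ∫_0^∞ e^{at - ρ sinh t} dt` -/
noncomputable def Aint (ρ a : ℝ) : ℝ := ∫ t in Ioi (0:ℝ), Real.exp (a*t - ρ * Real.sinh t)

lemma master_eq (a ρ t : ℝ) :
    Real.exp (a*t - ρ * Real.sinh t) = Real.exp (a*t) * Real.exp (-(ρ * Real.sinh t)) := by
  rw [← Real.exp_add]; ring_nf

lemma integrableOn_A {ρ a : ℝ} (hρ : 0 < ρ) (ha : 0 ≤ a) :
    IntegrableOn (fun t => Real.exp (a*t - ρ * Real.sinh t)) (Ioi (0:ℝ)) := by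
  apply integrableOn_of_le_master (a := a) (c := 1) hρ
  · exact Real.continuous_exp.comp (by continuity)
  · intro t ht
    rw [master_eq, abs_of_nonneg (by positivity), one_mul]
    nlinarith [Real.one_le_cosh t, Real.exp_pos (a*t), Real.exp_pos (-(ρ * Real.sinh t)),
      mul_pos (Real.exp_pos (a*t)) (Real.exp_pos (-(ρ * Real.sinh t)))]

lemma A_lower {ρ a : ℝ} (hρ : 0 < ρ) (ha : 0 ≤ a) :
    Real.exp (a/2 - ρ * Real.sinh 1) * (1/2) ≤ Aint ρ a := by
  have hsub : Ioc (1/2 : ℝ) 1 ⊆ Ioi (0:ℝ) := fun x hx => lt_of_lt_of_le (by norm_num) hx.1.le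
  have hint := integrableOn_A hρ ha (ρ := ρ)
  have h1 : ∫ t in Ioc (1/2 : ℝ) 1, Real.exp (a*t - ρ * Real.sinh t) ≤ Aint ρ a := by
    apply setIntegral_mono_set hint
    · filter_upwards with t using Real.exp_nonneg _
    · exact HasSubset.Subset.eventuallyLE hsub
  refine le_trans ?_ h1
  have h2 : Real.exp (a/2 - ρ * Real.sinh 1) * (volume (Ioc (1/2:ℝ) 1)).toReal ≤
      ∫ t in Ioc (1/2 : ℝ) 1, Real.exp (a*t - ρ * Real.sinh t) := by
    apply setIntegral_ge_of_const_le_real measurableSet_Ioc (by simp)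
    · intro x hx
      apply Real.exp_le_exp.2
      have h3 : Real.sinh x ≤ Real.sinh 1 := Real.sinh_le_sinh.2 hx.2
      have h4 : a/2 ≤ a * x := by nlinarith [hx.1]
      nlinarith
    · exact hint.mono_set hsub
  rw [Real.volume_Ioc, ENNReal.toReal_ofReal (by norm_num)] at h2
  linarith [h2]

lemma A_pos {ρ a : ℝ} (hρ : 0 < ρ) (ha : 0 ≤ a) : 0 < Aint ρ a :=
  lt_of_lt_of_le (by positivity) (A_lower hρ ha)

lemma A_mono {ρ a b : ℝ} (hρ : 0 < ρ) (ha : 0 ≤ a) (hab : a ≤ b) : Aint ρ a ≤ Aint ρ b := by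
  apply setIntegral_mono_on (integrableOn_A hρ ha) (integrableOn_A hρ (ha.trans hab))
    measurableSet_Ioi
  intro x hx
  apply Real.exp_le_exp.2
  have : a * x ≤ b * x := mul_le_mul_of_nonneg_right hab (le_of_lt hx)
  linarith

lemma integral_ibp {ρ a : ℝ} (hρ : 0 < ρ) (ha : 0 ≤ a) :
    ∫ t in Ioi (0:ℝ), (ρ * Real.cosh t - a) * Real.exp (a*t - ρ * Real.sinh t) = 1 := by
  have hderiv : ∀ x ∈ Ici (0:ℝ), HasDerivAt (fun t => -Real.exp (a*t - ρ * Real.sinh t))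
      ((ρ * Real.cosh x - a) * Real.exp (a*x - ρ * Real.sinh x)) x := by
    intro x _
    have h1 : HasDerivAt (fun t : ℝ => a*t - ρ * Real.sinh t) (a - ρ * Real.cosh x) x := by
      have := ((hasDerivAt_id' x).const_mul a).sub ((Real.hasDerivAt_sinh x).const_mul ρ)
      rw [mul_one] at this
      exact this
    have h2 := (h1.exp).neg
    exact h2.congr_deriv (by ring)
  have hfint : IntegrableOn
      (fun t => (ρ * Real.cosh t - a) * Real.exp (a*t - ρ * Real.sinh t)) (Ioi (0:ℝ)) := by
    apply integrableOn_of_le_master (a := a) (c := ρ + a) hρ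
    · exact (continuous_const.mul Real.continuous_cosh |>.sub continuous_const).mul
        (Real.continuous_exp.comp (by continuity))
    · intro t ht
      rw [abs_mul, abs_of_nonneg (Real.exp_nonneg _)]
      have h5 : |ρ * Real.cosh t - a| ≤ (ρ + a) * Real.cosh t := by
        rw [abs_le]
        constructor <;> nlinarith [Real.one_le_cosh t, Real.cosh_pos (x := t)]
      calc |ρ * Real.cosh t - a| * Real.exp (a*t - ρ * Real.sinh t)
          ≤ ((ρ + a) * Real.cosh t) * Real.exp (a*t - ρ * Real.sinh t) :=
            mul_le_mul_of_nonneg_right h5 (Real.exp_nonneg _)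
        _ = (ρ + a) * (Real.exp (a * t) * Real.cosh t * Real.exp (-(ρ * Real.sinh t))) := by
            rw [master_eq]; ring
  have htend : Tendsto (fun t => -Real.exp (a*t - ρ * Real.sinh t)) atTop (𝓝 0) := by
    rw [← neg_zero]
    apply Tendsto.neg
    apply squeeze_zero' (Eventually.of_forall (fun t => Real.exp_nonneg _))
    · filter_upwards [eventually_ge_atTop (0:ℝ)] with t ht
      calc Real.exp (a*t - ρ * Real.sinh t)
          ≤ Real.exp (a * t) * Real.cosh t * Real.exp (-(ρ * Real.sinh t)) := by
            rw [master_eq]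
            nlinarith [Real.one_le_cosh t,
              mul_pos (Real.exp_pos (a*t)) (Real.exp_pos (-(ρ * Real.sinh t)))]
        _ ≤ Real.exp (ρ/2 + 2*(a+2)^2/ρ) * Real.exp (-t) := key_exp_bound hρ ht
    · rw [show (0:ℝ) = Real.exp (ρ/2 + 2*(a+2)^2/ρ) * 0 by ring]
      exact (Real.tendsto_exp_neg_atTop_nhds_zero).const_mul _
  have := integral_Ioi_of_hasDerivAt_of_tendsto' hderiv hfint htend
  rw [this]
  simp

lemma integral_cosh_eq {ρ a : ℝ} (hρ : 0 < ρ) (ha : 0 ≤ a) :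
    ∫ t in Ioi (0:ℝ), Real.cosh t * Real.exp (a*t - ρ * Real.sinh t) =
      (1 + a * Aint ρ a) / ρ := by
  have hcoshint : IntegrableOn (fun t => Real.cosh t * Real.exp (a*t - ρ * Real.sinh t))
      (Ioi (0:ℝ)) := by
    apply integrableOn_of_le_master (a := a) (c := 1) hρ
    · exact Real.continuous_cosh.mul (Real.continuous_exp.comp (by continuity))
    · intro t ht
      rw [abs_of_nonneg (mul_nonneg (Real.cosh_pos t).le (Real.exp_nonneg _)), one_mul]
      exact le_of_eq (by rw [master_eq]; ring)
  have h1 := integral_ibp hρ ha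
  have h2 : ∫ t in Ioi (0:ℝ), (ρ * Real.cosh t - a) * Real.exp (a*t - ρ * Real.sinh t) =
      ρ * (∫ t in Ioi (0:ℝ), Real.cosh t * Real.exp (a*t - ρ * Real.sinh t)) - a * Aint ρ a := by
    rw [Aint, ← MeasureTheory.integral_const_mul, ← MeasureTheory.integral_const_mul, ← MeasureTheory.integral_sub]
    · congr 1; ext t; ring
    · exact hcoshint.const_mul ρ
    · exact (integrableOn_A hρ ha).const_mul a
  rw [h2] at h1
  field_simp
  linarith [h1]

lemma integral_sinh_le {ρ a : ℝ} (hρ : 0 < ρ) (ha : 0 ≤ a) :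
    ∫ t in Ioi (0:ℝ), Real.sinh t * Real.exp (a*t - ρ * Real.sinh t) ≤
      (1 + a * Aint ρ a) / ρ := by
  rw [← integral_cosh_eq hρ ha]
  apply setIntegral_mono_on
  · apply integrableOn_of_le_master (a := a) (c := 1) hρ
    · exact Real.continuous_sinh.mul (Real.continuous_exp.comp (by continuity))
    · intro t ht
      rw [abs_mul, abs_of_nonneg (Real.exp_nonneg _), one_mul]
      have h6 : |Real.sinh t| ≤ Real.cosh t := by
        calc |Real.sinh t| = Real.sinh |t| := Real.abs_sinh t
          _ ≤ Real.cosh |t| := le_of_lt (Real.sinh_lt_cosh |t|)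
          _ = Real.cosh t := Real.cosh_abs t
      calc |Real.sinh t| * Real.exp (a*t - ρ * Real.sinh t)
          ≤ Real.cosh t * Real.exp (a*t - ρ * Real.sinh t) :=
            mul_le_mul_of_nonneg_right h6 (Real.exp_nonneg _)
        _ = Real.exp (a * t) * Real.cosh t * Real.exp (-(ρ * Real.sinh t)) := by
            rw [master_eq]; ring
  · apply integrableOn_of_le_master (a := a) (c := 1) hρ
    · exact Real.continuous_cosh.mul (Real.continuous_exp.comp (by continuity))
    · intro t ht
      rw [abs_of_nonneg (mul_nonneg (Real.cosh_pos t).le (Real.exp_nonneg _)), one_mul]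
      exact le_of_eq (by rw [master_eq]; ring)
  · exact measurableSet_Ioi
  · intro x _
    exact mul_le_mul_of_nonneg_right (le_of_lt (Real.sinh_lt_cosh x)) (Real.exp_nonneg _)
lemma hasDerivAt_oscY (ν ρ : ℝ) :
    HasDerivAt (fun x => ∫ τ in (0:ℝ)..π, Real.sin (x * Real.sin τ - ν * τ))
      (∫ τ in (0:ℝ)..π, Real.sin τ * Real.cos (ρ * Real.sin τ - ν * τ)) ρ := by
  have := intervalIntegral.hasDerivAt_integral_of_dominated_loc_of_deriv_le
    (F := fun x τ => Real.sin (x * Real.sin τ - ν * τ))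
    (F' := fun x τ => Real.sin τ * Real.cos (x * Real.sin τ - ν * τ))
    (x₀ := ρ) (a := 0) (b := π) (μ := volume) (bound := fun _ => 1)
    (s := Metric.ball ρ 1) (Metric.ball_mem_nhds ρ one_pos)
    (Eventually.of_forall fun x => (Continuous.aestronglyMeasurable (by continuity)))
    (Continuous.intervalIntegrable (by continuity) _ _)
    (Continuous.aestronglyMeasurable (by continuity))
    (Eventually.of_forall fun τ _ => fun x _ => by
      rw [Real.norm_eq_abs, abs_mul]
      exact mul_le_one₀ (Real.abs_sin_le_one τ) (abs_nonneg _) (Real.abs_cos_le_one _))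
    (intervalIntegrable_const)
    (Eventually.of_forall fun τ _ => fun x _ => by
      have h1 : HasDerivAt (fun y : ℝ => y * Real.sin τ - ν * τ) (Real.sin τ) x := by
        simpa using (hasDerivAt_mul_const (Real.sin τ)).sub_const (ν * τ)
      simpa [mul_comm] using h1.sin)
  exact this.2

/-- derivative of the oscillatory integral for J -/
lemma hasDerivAt_oscJ (ν ρ : ℝ) :
    HasDerivAt (fun x => ∫ τ in (0:ℝ)..π, Real.cos (ν * τ - x * Real.sin τ))
      (∫ τ in (0:ℝ)..π, Real.sin τ * Real.sin (ν * τ - ρ * Real.sin τ)) ρ := by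
  have := intervalIntegral.hasDerivAt_integral_of_dominated_loc_of_deriv_le
    (F := fun x τ => Real.cos (ν * τ - x * Real.sin τ))
    (F' := fun x τ => Real.sin τ * Real.sin (ν * τ - x * Real.sin τ))
    (x₀ := ρ) (a := 0) (b := π) (μ := volume) (bound := fun _ => 1)
    (s := Metric.ball ρ 1) (Metric.ball_mem_nhds ρ one_pos)
    (Eventually.of_forall fun x => (Continuous.aestronglyMeasurable (by continuity)))
    (Continuous.intervalIntegrable (by continuity) _ _)
    (Continuous.aestronglyMeasurable (by continuity))
    (Eventually.of_forall fun τ _ => fun x _ => by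
      rw [Real.norm_eq_abs, abs_mul]
      exact mul_le_one₀ (Real.abs_sin_le_one τ) (abs_nonneg _) (Real.abs_sin_le_one _))
    (intervalIntegrable_const)
    (Eventually.of_forall fun τ _ => fun x _ => by
      have h1 : HasDerivAt (fun y : ℝ => ν * τ - y * Real.sin τ) (-Real.sin τ) x := by
        simpa using (HasDerivAt.const_sub (ν * τ) (hasDerivAt_mul_const (Real.sin τ)))
      have h2 := h1.cos
      exact h2.congr_deriv (by ring))
  exact this.2

lemma abs_g_le {ν c t : ℝ} (hc : |c| ≤ 1) (ht : 0 ≤ t) :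
    |Real.exp (ν*t) + Real.exp (-(ν*t)) * c| ≤ 2 * Real.exp (|ν| * t) := by
  have h1 : Real.exp (ν*t) ≤ Real.exp (|ν| * t) :=
    Real.exp_le_exp.2 (mul_le_mul_of_nonneg_right (le_abs_self ν) ht)
  have h2 : Real.exp (-(ν*t)) ≤ Real.exp (|ν| * t) := by
    apply Real.exp_le_exp.2
    rw [← neg_mul]
    exact mul_le_mul_of_nonneg_right (neg_le_abs ν) ht
  calc |Real.exp (ν*t) + Real.exp (-(ν*t)) * c|
      ≤ |Real.exp (ν*t)| + |Real.exp (-(ν*t)) * c| := abs_add_le _ _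
    _ ≤ Real.exp (|ν| * t) + Real.exp (|ν| * t) * 1 := by
        rw [abs_of_nonneg (Real.exp_nonneg _), abs_mul, abs_of_nonneg (Real.exp_nonneg _)]
        exact add_le_add h1 (mul_le_mul h2 hc (abs_nonneg _) (Real.exp_nonneg _))
    _ = 2 * Real.exp (|ν| * t) := by ring

lemma hasDerivAt_expY {ρ : ℝ} (hρ : 0 < ρ) (ν c : ℝ) (hc : |c| ≤ 1) :
    HasDerivAt (fun x => ∫ t in Ioi (0:ℝ),
        (Real.exp (ν*t) + Real.exp (-(ν*t)) * c) * Real.exp (-(x * Real.sinh t)))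
      (∫ t in Ioi (0:ℝ),
        -((Real.exp (ν*t) + Real.exp (-(ν*t)) * c) *
          (Real.sinh t * Real.exp (-(ρ * Real.sinh t))))) ρ := by
  have hmaster := integrableOn_master (a := |ν|) (show (0:ℝ) < ρ/2 by linarith)
  have := hasDerivAt_integral_of_dominated_loc_of_deriv_le
    (μ := volume.restrict (Ioi (0:ℝ)))
    (F := fun x t => (Real.exp (ν*t) + Real.exp (-(ν*t)) * c) * Real.exp (-(x * Real.sinh t)))
    (F' := fun x t => -((Real.exp (ν*t) + Real.exp (-(ν*t)) * c) *
          (Real.sinh t * Real.exp (-(x * Real.sinh t)))))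
    (x₀ := ρ)
    (bound := fun t => 2 * (Real.exp (|ν| * t) * Real.cosh t * Real.exp (-((ρ/2) * Real.sinh t))))
    (s := Metric.ball ρ (ρ/2)) (Metric.ball_mem_nhds ρ (by linarith))
    (Eventually.of_forall fun x => (Continuous.aestronglyMeasurable (by continuity)))
    (by
      apply integrableOn_of_le_master (a := |ν|) (c := 2) hρ (by continuity)
      intro t ht
      rw [abs_mul, abs_of_nonneg (Real.exp_nonneg _)]
      have := abs_g_le (ν := ν) hc ht.le
      calc |Real.exp (ν*t) + Real.exp (-(ν*t)) * c| * Real.exp (-(ρ * Real.sinh t))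
          ≤ (2 * Real.exp (|ν| * t)) * Real.exp (-(ρ * Real.sinh t)) :=
            mul_le_mul_of_nonneg_right this (Real.exp_nonneg _)
        _ ≤ 2 * (Real.exp (|ν| * t) * Real.cosh t * Real.exp (-(ρ * Real.sinh t))) := by
            nlinarith [Real.one_le_cosh t,
              mul_pos (Real.exp_pos (|ν| * t)) (Real.exp_pos (-(ρ * Real.sinh t)))])
    (Continuous.aestronglyMeasurable (by continuity))
    (by
      filter_upwards [ae_restrict_mem measurableSet_Ioi] with t ht x hx
      have hx2 : ρ/2 ≤ x := by
        have := abs_lt.1 (mem_ball_iff_norm.1 hx)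
        linarith [this.1]
      have hsh : 0 ≤ Real.sinh t := Real.sinh_nonneg_iff.2 ht.le
      rw [Real.norm_eq_abs, abs_neg, abs_mul, abs_mul,
        abs_of_nonneg hsh, abs_of_nonneg (Real.exp_nonneg _)]
      have he : Real.exp (-(x * Real.sinh t)) ≤ Real.exp (-((ρ/2) * Real.sinh t)) :=
        Real.exp_le_exp.2 (by nlinarith)
      have hg := abs_g_le (ν := ν) hc ht.le
      have hsc : Real.sinh t ≤ Real.cosh t := le_of_lt (Real.sinh_lt_cosh t)
      calc |Real.exp (ν*t) + Real.exp (-(ν*t)) * c| * (Real.sinh t * Real.exp (-(x * Real.sinh t)))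
          ≤ (2 * Real.exp (|ν| * t)) * (Real.cosh t * Real.exp (-((ρ/2) * Real.sinh t))) := by
            apply mul_le_mul hg _ (by positivity) (by positivity)
            exact mul_le_mul hsc he (Real.exp_nonneg _) (Real.cosh_pos t).le
        _ = 2 * (Real.exp (|ν| * t) * Real.cosh t * Real.exp (-((ρ/2) * Real.sinh t))) := by ring)
    (hmaster.const_mul 2)
    (by
      filter_upwards [ae_restrict_mem measurableSet_Ioi] with t _ x _
      have h1 : HasDerivAt (fun y : ℝ => -(y * Real.sinh t)) (-Real.sinh t) x :=
        (hasDerivAt_mul_const (Real.sinh t)).neg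
      have h2 := (h1.exp).const_mul (Real.exp (ν*t) + Real.exp (-(ν*t)) * c)
      exact h2.congr_deriv (by ring))
  exact this.2

lemma sinh_nonneg' {t : ℝ} (ht : 0 ≤ t) : 0 ≤ Real.sinh t := Real.sinh_nonneg_iff.2 ht

lemma besselJ_int (m : ℤ) :
    besselJ (m:ℝ) = fun ρ =>
      (1 / π) * (∫ τ in (0:ℝ)..π, Real.cos (m * τ - ρ * Real.sin τ)) := by
  funext ρ
  unfold besselJ
  rw [Real.sin_int_mul_pi]
  simp

/-- `Jd m ρ` : the derivative of `besselJ m` -/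
noncomputable def Jd (m : ℤ) (ρ : ℝ) : ℝ :=
  (1 / π) * ∫ τ in (0:ℝ)..π, Real.sin τ * Real.sin (m * τ - ρ * Real.sin τ)

/-- `Yd m ρ` : the derivative of `besselY m` -/
noncomputable def Yd (m : ℤ) (ρ : ℝ) : ℝ :=
  (1 / π) * (∫ τ in (0:ℝ)..π, Real.sin τ * Real.cos (ρ * Real.sin τ - m * τ)) -
    (1 / π) * (∫ t in Ioi (0:ℝ),
      -((Real.exp (m*t) + Real.exp (-((m:ℝ)*t)) * Real.cos (m*π)) *
        (Real.sinh t * Real.exp (-(ρ * Real.sinh t)))))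

lemma besselJ_hasDerivAt (m : ℤ) (ρ : ℝ) :
    HasDerivAt (besselJ (m:ℝ)) (Jd m ρ) ρ := by
  rw [besselJ_int]
  exact (hasDerivAt_oscJ (m:ℝ) ρ).const_mul (1/π)

lemma besselY_hasDerivAt (m : ℤ) {ρ : ℝ} (hρ : 0 < ρ) :
    HasDerivAt (besselY (m:ℝ)) (Yd m ρ) ρ := by
  have h1 := hasDerivAt_oscY (m:ℝ) ρ
  have h2 := hasDerivAt_expY hρ (m:ℝ) (Real.cos ((m:ℝ)*π)) (Real.abs_cos_le_one _)
  exact (h1.const_mul (1/π)).sub (h2.const_mul (1/π))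

lemma Jd_bound (m : ℤ) (ρ : ℝ) : |Jd m ρ| ≤ 1 := by
  unfold Jd
  rw [abs_mul]
  have h1 : |∫ τ in (0:ℝ)..π, Real.sin τ * Real.sin (m * τ - ρ * Real.sin τ)| ≤ 1 * |π - 0| := by
    rw [← Real.norm_eq_abs (∫ τ in (0:ℝ)..π, Real.sin τ * Real.sin (m * τ - ρ * Real.sin τ))]
    apply intervalIntegral.norm_integral_le_of_norm_le_const
    intro x _
    rw [Real.norm_eq_abs, abs_mul]
    exact mul_le_one₀ (Real.abs_sin_le_one x) (abs_nonneg _) (Real.abs_sin_le_one _)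
  have hπ := Real.pi_pos
  rw [abs_of_pos (by positivity : (0:ℝ) < 1/π)]
  calc (1/π) * |∫ τ in (0:ℝ)..π, Real.sin τ * Real.sin (m * τ - ρ * Real.sin τ)|
      ≤ (1/π) * (1 * |π - 0|) := by
        exact mul_le_mul_of_nonneg_left h1 (by positivity)
    _ = 1 := by rw [sub_zero, abs_of_pos hπ]; field_simp

lemma integrableOn_sinh_exp {ρ a : ℝ} (hρ : 0 < ρ) :
    IntegrableOn (fun t => Real.sinh t * Real.exp (a*t - ρ * Real.sinh t)) (Ioi (0:ℝ)) := by
  apply integrableOn_of_le_master (a := a) (c := 1) hρ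
  · exact Real.continuous_sinh.mul (Real.continuous_exp.comp (by continuity))
  · intro t ht
    rw [abs_mul, abs_of_nonneg (Real.exp_nonneg _), one_mul]
    have h6 : |Real.sinh t| ≤ Real.cosh t := by
      calc |Real.sinh t| = Real.sinh |t| := Real.abs_sinh t
        _ ≤ Real.cosh |t| := le_of_lt (Real.sinh_lt_cosh |t|)
        _ = Real.cosh t := Real.cosh_abs t
    calc |Real.sinh t| * Real.exp (a*t - ρ * Real.sinh t)
        ≤ Real.cosh t * Real.exp (a*t - ρ * Real.sinh t) :=
          mul_le_mul_of_nonneg_right h6 (Real.exp_nonneg _)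
      _ = Real.exp (a * t) * Real.cosh t * Real.exp (-(ρ * Real.sinh t)) := by
          rw [master_eq]; ring

lemma Yd_bound (m : ℤ) {ρ : ℝ} (hρ : 0 < ρ) :
    |Yd m ρ| ≤ 1 + (2/π) * ((1 + |(m:ℝ)| * Aint ρ |(m:ℝ)|) / ρ) := by
  unfold Yd
  have hπ := Real.pi_pos
  have h1 : |(1/π) * (∫ τ in (0:ℝ)..π, Real.sin τ * Real.cos (ρ * Real.sin τ - m * τ))| ≤ 1 := by
    rw [abs_mul, abs_of_pos (by positivity : (0:ℝ) < 1/π)]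
    have h1' : |∫ τ in (0:ℝ)..π, Real.sin τ * Real.cos (ρ * Real.sin τ - m * τ)| ≤ 1 * |π - 0| := by
      rw [← Real.norm_eq_abs (∫ τ in (0:ℝ)..π, Real.sin τ * Real.cos (ρ * Real.sin τ - m * τ))]
      apply intervalIntegral.norm_integral_le_of_norm_le_const
      intro x _
      rw [Real.norm_eq_abs, abs_mul]
      exact mul_le_one₀ (Real.abs_sin_le_one x) (abs_nonneg _) (Real.abs_cos_le_one _)
    calc (1/π) * |∫ τ in (0:ℝ)..π, Real.sin τ * Real.cos (ρ * Real.sin τ - m * τ)|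
        ≤ (1/π) * (1 * |π - 0|) := mul_le_mul_of_nonneg_left h1' (by positivity)
      _ = 1 := by rw [sub_zero, abs_of_pos hπ]; field_simp
  have h2 : |∫ t in Ioi (0:ℝ),
      -((Real.exp (m*t) + Real.exp (-((m:ℝ)*t)) * Real.cos (m*π)) *
        (Real.sinh t * Real.exp (-(ρ * Real.sinh t))))| ≤
      2 * ((1 + |(m:ℝ)| * Aint ρ |(m:ℝ)|) / ρ) := by
    have hb : ∀ᵐ t ∂(volume.restrict (Ioi (0:ℝ))),
        ‖-((Real.exp (m*t) + Real.exp (-((m:ℝ)*t)) * Real.cos (m*π)) *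
          (Real.sinh t * Real.exp (-(ρ * Real.sinh t))))‖ ≤
        2 * (Real.sinh t * Real.exp (|(m:ℝ)| * t - ρ * Real.sinh t)) := by
      filter_upwards [ae_restrict_mem measurableSet_Ioi] with t ht
      have hsh : 0 ≤ Real.sinh t := Real.sinh_nonneg_iff.2 ht.le
      rw [Real.norm_eq_abs, abs_neg, abs_mul, abs_mul, abs_of_nonneg hsh,
        abs_of_nonneg (Real.exp_nonneg _)]
      have hg := abs_g_le (ν := (m:ℝ)) (c := Real.cos ((m:ℝ)*π)) (Real.abs_cos_le_one _) ht.le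
      calc |Real.exp (m*t) + Real.exp (-((m:ℝ)*t)) * Real.cos (m*π)| *
            (Real.sinh t * Real.exp (-(ρ * Real.sinh t)))
          ≤ (2 * Real.exp (|(m:ℝ)| * t)) * (Real.sinh t * Real.exp (-(ρ * Real.sinh t))) :=
            mul_le_mul_of_nonneg_right hg (by positivity)
        _ = 2 * (Real.sinh t * Real.exp (|(m:ℝ)| * t - ρ * Real.sinh t)) := by
            rw [master_eq]; ring
    have hint : IntegrableOn
        (fun t => 2 * (Real.sinh t * Real.exp (|(m:ℝ)| * t - ρ * Real.sinh t))) (Ioi (0:ℝ)) :=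
      (integrableOn_sinh_exp hρ).const_mul 2
    have h3 := norm_integral_le_of_norm_le hint hb
    rw [Real.norm_eq_abs] at h3
    refine h3.trans ?_
    rw [MeasureTheory.integral_const_mul]
    have := integral_sinh_le hρ (abs_nonneg (m:ℝ))
    linarith
  have h4 : |(1/π) * (∫ t in Ioi (0:ℝ),
      -((Real.exp (m*t) + Real.exp (-((m:ℝ)*t)) * Real.cos (m*π)) *
        (Real.sinh t * Real.exp (-(ρ * Real.sinh t)))))| ≤
      (2/π) * ((1 + |(m:ℝ)| * Aint ρ |(m:ℝ)|) / ρ) := by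
    rw [abs_mul, abs_of_pos (by positivity : (0:ℝ) < 1/π)]
    calc (1/π) * |∫ t in Ioi (0:ℝ),
        -((Real.exp (m*t) + Real.exp (-((m:ℝ)*t)) * Real.cos (m*π)) *
          (Real.sinh t * Real.exp (-(ρ * Real.sinh t))))|
        ≤ (1/π) * (2 * ((1 + |(m:ℝ)| * Aint ρ |(m:ℝ)|) / ρ)) :=
          mul_le_mul_of_nonneg_left h2 (by positivity)
      _ = (2/π) * ((1 + |(m:ℝ)| * Aint ρ |(m:ℝ)|) / ρ) := by ring
  calc |(1/π) * (∫ τ in (0:ℝ)..π, Real.sin τ * Real.cos (ρ * Real.sin τ - m * τ)) -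
        (1/π) * (∫ t in Ioi (0:ℝ),
          -((Real.exp (m*t) + Real.exp (-((m:ℝ)*t)) * Real.cos (m*π)) *
            (Real.sinh t * Real.exp (-(ρ * Real.sinh t)))))|
      ≤ |(1/π) * (∫ τ in (0:ℝ)..π, Real.sin τ * Real.cos (ρ * Real.sin τ - m * τ))| +
        |(1/π) * (∫ t in Ioi (0:ℝ),
          -((Real.exp (m*t) + Real.exp (-((m:ℝ)*t)) * Real.cos (m*π)) *
            (Real.sinh t * Real.exp (-(ρ * Real.sinh t)))))| := abs_sub _ _
    _ ≤ 1 + (2/π) * ((1 + |(m:ℝ)| * Aint ρ |(m:ℝ)|) / ρ) := add_le_add h1 h4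



lemma integrableOn_g_exp {ρ : ℝ} (hρ : 0 < ρ) (ν c : ℝ) (hc : |c| ≤ 1) :
    IntegrableOn (fun t => (Real.exp (ν * t) + Real.exp (-(ν * t)) * c) *
      Real.exp (-(ρ * Real.sinh t))) (Ioi (0:ℝ)) := by
  apply integrableOn_of_le_master (a := |ν|) (c := 2) hρ (by continuity)
  intro t ht
  rw [abs_mul, abs_of_nonneg (Real.exp_nonneg _)]
  have hg := abs_g_le (ν := ν) (c := c) hc ht.le
  calc |Real.exp (ν*t) + Real.exp (-(ν*t)) * c| * Real.exp (-(ρ * Real.sinh t))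
      ≤ (2 * Real.exp (|ν| * t)) * Real.exp (-(ρ * Real.sinh t)) :=
        mul_le_mul_of_nonneg_right hg (Real.exp_nonneg _)
    _ ≤ 2 * (Real.exp (|ν| * t) * Real.cosh t * Real.exp (-(ρ * Real.sinh t))) := by
        nlinarith [Real.one_le_cosh t,
          mul_pos (Real.exp_pos (|ν| * t)) (Real.exp_pos (-(ρ * Real.sinh t)))]

lemma integrableOn_exp_neg_mul {ρ a : ℝ} (hρ : 0 < ρ) (ha : 0 ≤ a) :
    IntegrableOn (fun t => Real.exp (-(a * t)) * Real.exp (-(ρ * Real.sinh t))) (Ioi (0:ℝ)) := by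
  apply integrableOn_of_le_master (a := 0) (c := 1) hρ (by continuity)
  intro t ht
  rw [abs_of_nonneg (by positivity), one_mul]
  have h1 : Real.exp (-(a*t)) ≤ 1 := Real.exp_le_one_iff.2 (by nlinarith)
  have h2 : Real.exp ((0:ℝ) * t) = 1 := by norm_num
  rw [h2]
  nlinarith [Real.one_le_cosh t, Real.exp_pos (-(ρ * Real.sinh t)),
    Real.exp_nonneg (-(a*t))]

lemma integral_exp_neg_mul_le {ρ a : ℝ} (hρ : 0 < ρ) (ha : 0 ≤ a) :
    ∫ t in Ioi (0:ℝ), Real.exp (-(a * t)) * Real.exp (-(ρ * Real.sinh t)) ≤ Aint ρ 0 := by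
  unfold Aint
  apply setIntegral_mono_on (integrableOn_exp_neg_mul hρ ha)
    (integrableOn_A hρ le_rfl) measurableSet_Ioi
  intro x hx
  have h1 : Real.exp (-(a*x)) ≤ 1 := Real.exp_le_one_iff.2 (by nlinarith [hx.out])
  have h2 : Real.exp ((0:ℝ) * x - ρ * Real.sinh x) = Real.exp (-(ρ * Real.sinh x)) := by
    norm_num
  rw [h2]
  nlinarith [Real.exp_pos (-(ρ * Real.sinh x))]

lemma abs_Q2_lower (m : ℤ) {ρ : ℝ} (hρ : 0 < ρ) :
    Aint ρ |(m:ℝ)| - Aint ρ 0 ≤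
      |∫ t in Ioi (0:ℝ), (Real.exp ((m:ℝ) * t) + Real.exp (-((m:ℝ) * t)) * Real.cos ((m:ℝ) * π)) *
        Real.exp (-(ρ * Real.sinh t))| := by
  set ν : ℝ := (m:ℝ) with hν
  have hc : Real.cos (ν * π) = 1 ∨ Real.cos (ν * π) = -1 :=
    (abs_eq zero_le_one).1 (Real.abs_cos_int_mul_pi m)
  obtain ⟨ε, hεc, hpt⟩ : ∃ ε : ℝ, (ε = 1 ∨ ε = -1) ∧ ∀ t : ℝ, 0 ≤ t →
      Real.exp (|ν| * t) - Real.exp (-(|ν| * t)) ≤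
        ε * (Real.exp (ν * t) + Real.exp (-(ν * t)) * Real.cos (ν * π)) := by
    rcases le_or_gt 0 ν with hs | hs
    · refine ⟨1, Or.inl rfl, fun t ht => ?_⟩
      rw [abs_of_nonneg hs, one_mul]
      rcases hc with hc | hc <;> rw [hc] <;> nlinarith [Real.exp_pos (-(ν * t))]
    · rcases hc with hc | hc
      · refine ⟨1, Or.inl rfl, fun t ht => ?_⟩
        rw [abs_of_neg hs, neg_mul, neg_neg, one_mul, hc, mul_one]
        nlinarith [Real.exp_pos (ν * t)]
      · refine ⟨-1, Or.inr rfl, fun t ht => ?_⟩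
        rw [abs_of_neg hs, neg_mul, neg_neg, hc]
        ring_nf
        nlinarith [Real.exp_pos (ν * t), Real.exp_pos (-(ν * t))]
  have hQint := integrableOn_g_exp hρ ν (Real.cos (ν * π)) (Real.abs_cos_le_one _)
  have hfint1 : IntegrableOn (fun t => Real.exp (|ν| * t - ρ * Real.sinh t)) (Ioi (0:ℝ)) :=
    integrableOn_A hρ (abs_nonneg ν)
  have hfint2 := integrableOn_exp_neg_mul hρ (abs_nonneg ν) (ρ := ρ)
  have heq : (fun t => (Real.exp (|ν| * t) - Real.exp (-(|ν| * t))) *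
      Real.exp (-(ρ * Real.sinh t))) = fun t =>
      Real.exp (|ν| * t - ρ * Real.sinh t) -
        Real.exp (-(|ν| * t)) * Real.exp (-(ρ * Real.sinh t)) := by
    funext t; rw [master_eq]; ring
  set Q : ℝ := ∫ t in Ioi (0:ℝ), (Real.exp (ν * t) + Real.exp (-(ν * t)) * Real.cos (ν * π)) *
        Real.exp (-(ρ * Real.sinh t)) with hQ
  have step1 : Aint ρ |ν| - Aint ρ 0 ≤
      ∫ t in Ioi (0:ℝ), (Real.exp (|ν| * t) - Real.exp (-(|ν| * t))) *
        Real.exp (-(ρ * Real.sinh t)) := by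
    rw [heq, MeasureTheory.integral_sub hfint1 hfint2]
    have h5 := integral_exp_neg_mul_le hρ (abs_nonneg ν) (ρ := ρ)
    have e1 : Aint ρ |ν| = ∫ t in Ioi (0:ℝ), Real.exp (|ν| * t - ρ * Real.sinh t) := rfl
    rw [e1]
    linarith
  have step2 : (∫ t in Ioi (0:ℝ), (Real.exp (|ν| * t) - Real.exp (-(|ν| * t))) *
      Real.exp (-(ρ * Real.sinh t))) ≤ ε * Q := by
    have hmono : (∫ t in Ioi (0:ℝ), (Real.exp (|ν| * t) - Real.exp (-(|ν| * t))) *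
        Real.exp (-(ρ * Real.sinh t))) ≤
        ∫ t in Ioi (0:ℝ), ε * ((Real.exp (ν * t) + Real.exp (-(ν * t)) * Real.cos (ν * π)) *
          Real.exp (-(ρ * Real.sinh t))) := by
      apply setIntegral_mono_on (by rw [heq]; exact hfint1.sub hfint2)
        (hQint.const_mul ε) measurableSet_Ioi
      intro x hx
      have h3 := hpt x (le_of_lt hx.out)
      have h4 : (0:ℝ) ≤ Real.exp (-(ρ * Real.sinh x)) := Real.exp_nonneg _
      calc (Real.exp (|ν| * x) - Real.exp (-(|ν| * x))) * Real.exp (-(ρ * Real.sinh x))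
          ≤ (ε * (Real.exp (ν * x) + Real.exp (-(ν * x)) * Real.cos (ν * π))) *
            Real.exp (-(ρ * Real.sinh x)) := mul_le_mul_of_nonneg_right h3 h4
        _ = ε * ((Real.exp (ν * x) + Real.exp (-(ν * x)) * Real.cos (ν * π)) *
            Real.exp (-(ρ * Real.sinh x))) := by ring
    rwa [MeasureTheory.integral_const_mul] at hmono
  have step3 : ε * Q ≤ |Q| := by
    rcases hεc with h | h <;> rw [h]
    · rw [one_mul]; exact le_abs_self Q
    · rw [neg_one_mul]; exact neg_le_abs Q
  linarith


lemma besselY_lower (m : ℤ) {ρ : ℝ} (hρ : 0 < ρ) :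
    (1/π) * (Aint ρ |(m:ℝ)| - Aint ρ 0) - 1 ≤ |besselY (m:ℝ) ρ| := by
  have hπ := Real.pi_pos
  have hQ := abs_Q2_lower m hρ
  have hP : |∫ τ in (0:ℝ)..π, Real.sin (ρ * Real.sin τ - (m:ℝ) * τ)| ≤ π := by
    rw [← Real.norm_eq_abs (∫ τ in (0:ℝ)..π, Real.sin (ρ * Real.sin τ - (m:ℝ) * τ))]
    have := intervalIntegral.norm_integral_le_of_norm_le_const
      (C := 1) (f := fun τ => Real.sin (ρ * Real.sin τ - (m:ℝ) * τ)) (a := 0) (b := π)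
      (fun x _ => by rw [Real.norm_eq_abs]; exact Real.abs_sin_le_one _)
    simpa [abs_of_pos hπ] using this
  unfold besselY
  set P : ℝ := ∫ τ in (0:ℝ)..π, Real.sin (ρ * Real.sin τ - (m:ℝ) * τ)
  set Q : ℝ := ∫ t in Ioi (0:ℝ), (Real.exp ((m:ℝ) * t) + Real.exp (-((m:ℝ) * t)) *
    Real.cos ((m:ℝ) * π)) * Real.exp (-(ρ * Real.sinh t))
  have h1 : |(1/π) * Q| - |(1/π) * P| ≤ |(1/π) * P - (1/π) * Q| := by
    rw [abs_sub_comm]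
    exact abs_sub_abs_le_abs_sub _ _
  have h2 : |(1/π) * Q| = (1/π) * |Q| := by
    rw [abs_mul, abs_of_pos (by positivity : (0:ℝ) < 1/π)]
  have h3 : |(1/π) * P| ≤ 1 := by
    rw [abs_mul, abs_of_pos (by positivity : (0:ℝ) < 1/π)]
    calc (1/π) * |P| ≤ (1/π) * π := mul_le_mul_of_nonneg_left hP (by positivity)
      _ = 1 := by field_simp
  have h4 : (1/π) * (Aint ρ |(m:ℝ)| - Aint ρ 0) ≤ (1/π) * |Q| :=
    mul_le_mul_of_nonneg_left hQ (by positivity)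
  linarith

lemma hankel2_hasDerivAt (m : ℤ) {ρ : ℝ} (hρ : 0 < ρ) :
    HasDerivAt (hankel2 (m:ℝ)) ((Jd m ρ : ℂ) - Complex.I * (Yd m ρ : ℂ)) ρ := by
  have hJ := (besselJ_hasDerivAt m ρ).ofReal_comp
  have hY := ((besselY_hasDerivAt m hρ).ofReal_comp).const_mul Complex.I
  exact hJ.sub hY

lemma hankel2'_eq (m : ℤ) {ρ : ℝ} (hρ : 0 < ρ) :
    hankel2' (m:ℝ) ρ = (Jd m ρ : ℂ) - Complex.I * (Yd m ρ : ℂ) :=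
  (hankel2_hasDerivAt m hρ).deriv

lemma abs_hankel2'_le (m : ℤ) {ρ : ℝ} (hρ : 0 < ρ) :
    ‖hankel2' (m:ℝ) ρ‖ ≤ |Jd m ρ| + |Yd m ρ| := by
  rw [hankel2'_eq m hρ]
  calc ‖(Jd m ρ : ℂ) - Complex.I * (Yd m ρ : ℂ)‖
      ≤ ‖(Jd m ρ : ℂ)‖ + ‖Complex.I * (Yd m ρ : ℂ)‖ :=
        norm_sub_le _ _
    _ = |Jd m ρ| + |Yd m ρ| := by
        rw [Complex.norm_real, norm_mul, Complex.norm_I, one_mul, Complex.norm_real, Real.norm_eq_abs,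
            Real.norm_eq_abs]

lemma abs_hankel2_ge (m : ℤ) (ρ : ℝ) :
    |besselY (m:ℝ) ρ| ≤ ‖hankel2 (m:ℝ) ρ‖ := by
  have him : (hankel2 (m:ℝ) ρ).im = -(besselY (m:ℝ) ρ) := by
    simp [hankel2]
  have := Complex.abs_im_le_norm (hankel2 (m:ℝ) ρ)
  rwa [him, abs_neg] at this

set_option maxHeartbeats 1000000 in
lemma mult_bound {k R : ℝ} (hk : 0 < k) (hR : 0 < R) :
    ∃ C : ℝ, 0 < C ∧ ∀ m : ℤ,
      ‖dtnMult k R m‖ ≤ C * Real.sqrt (1 + (m:ℝ)^2) := by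
  have hπ := Real.pi_pos
  have hπ3 := Real.pi_gt_three
  set ρ : ℝ := k * R with hρdef
  have hρ : 0 < ρ := mul_pos hk hR
  set A₀ : ℝ := Aint ρ 0 with hA₀def
  have hA₀ : 0 < A₀ := A_pos hρ le_rfl
  set a₀ : ℝ := 2*(Real.log (4*(A₀+π)) + ρ*Real.sinh 1) with ha₀def
  have hbig : ∀ a : ℝ, 0 ≤ a → a₀ ≤ a → 2*(A₀+π) ≤ Aint ρ a := by
    intro a ha haa
    have h1 := A_lower hρ ha
    have h2 : Real.log (4*(A₀+π)) ≤ a/2 - ρ*Real.sinh 1 := by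
      rw [ha₀def] at haa; linarith
    have h3 : 4*(A₀+π) ≤ Real.exp (a/2 - ρ*Real.sinh 1) := by
      rw [← Real.exp_log (by positivity : (0:ℝ) < 4*(A₀+π))]
      exact Real.exp_le_exp.2 h2
    linarith
  set K : ℝ := 2*π*k*(2 + 2/(π*ρ)) with hKdef
  have hK : 0 < K := by positivity
  have hKbound : ∀ m : ℤ, a₀ ≤ |(m:ℝ)| →
      ‖dtnMult k R m‖ ≤ K * (1 + |(m:ℝ)|) := by
    intro m hm
    set n : ℝ := |(m:ℝ)| with hndef
    have hn : 0 ≤ n := abs_nonneg _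
    set An : ℝ := Aint ρ n with hAndef
    have hAn : 2*(A₀+π) ≤ An := hbig n hn hm
    have hAn1 : 1 ≤ An := by linarith
    have hY : An/(2*π) ≤ |besselY (m:ℝ) ρ| := by
      have h5 := besselY_lower m hρ
      have h6 : (1/π)*(An - A₀) - 1 - An/(2*π) = (An - 2*A₀ - 2*π)/(2*π) := by
        field_simp; ring
      have h7 : (0:ℝ) ≤ (An - 2*A₀ - 2*π)/(2*π) := by
        apply div_nonneg (by linarith) (by positivity)
      linarith
    have hH : An/(2*π) ≤ ‖hankel2 (m:ℝ) ρ‖ :=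
      hY.trans (abs_hankel2_ge m ρ)
    have hHpos : 0 < ‖hankel2 (m:ℝ) ρ‖ :=
      lt_of_lt_of_le (by positivity) hH
    have hH' : ‖hankel2' (m:ℝ) ρ‖ ≤ (2 + 2/(π*ρ)) * ((1+n) * An) := by
      have h8 := abs_hankel2'_le m hρ
      have h9 := Jd_bound m ρ
      have h10 := Yd_bound m hρ
      have h11 : (2/π) * ((1 + n * An)/ρ) = (2/(π*ρ)) * (1 + n*An) := by
        field_simp
      have h12 : (0:ℝ) < 2/(π*ρ) := by positivity
      have h13 : 1 + n*An ≤ (1+n)*An := by nlinarith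
      have h14 : (2/(π*ρ)) * (1 + n*An) ≤ (2/(π*ρ)) * ((1+n)*An) :=
        mul_le_mul_of_nonneg_left h13 h12.le
      nlinarith
    have habs : ‖dtnMult k R m‖ =
        k * (‖hankel2' (m:ℝ) ρ‖ / ‖hankel2 (m:ℝ) ρ‖) := by
      unfold dtnMult
      rw [norm_mul, norm_div, Complex.norm_real, Real.norm_eq_abs, abs_of_pos hk]
    rw [habs]
    have hdiv : ‖hankel2' (m:ℝ) ρ‖ / ‖hankel2 (m:ℝ) ρ‖ ≤
        ((2 + 2/(π*ρ)) * ((1+n) * An)) / (An/(2*π)) := by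
      apply div_le_div₀ (by positivity) hH' (by positivity) hH
    have heqd : ((2 + 2/(π*ρ)) * ((1+n) * An)) / (An/(2*π)) =
        2*π*(2 + 2/(π*ρ))*(1+n) := by
      rw [div_div_eq_mul_div]
      field_simp
    rw [heqd] at hdiv
    calc k * (‖hankel2' (m:ℝ) ρ‖ / ‖hankel2 (m:ℝ) ρ‖)
        ≤ k * (2*π*(2 + 2/(π*ρ))*(1+n)) := mul_le_mul_of_nonneg_left hdiv hk.le
      _ = K * (1+n) := by rw [hKdef]; ring
  -- small |m| : finite sup
  set M : ℕ := ⌈a₀⌉₊ with hMdef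
  have hne : (Finset.Icc (-(M:ℤ)) (M:ℤ)).Nonempty :=
    ⟨0, Finset.mem_Icc.2 ⟨by omega, by omega⟩⟩
  set C₀ : ℝ := (Finset.Icc (-(M:ℤ)) (M:ℤ)).sup' hne
    (fun j => ‖dtnMult k R j‖) with hC₀def
  have hC₀nonneg : 0 ≤ C₀ := by
    refine le_trans (norm_nonneg (dtnMult k R 0)) ?_
    rw [hC₀def]
    exact Finset.le_sup' (fun j => ‖dtnMult k R j‖)
      (Finset.mem_Icc.2 ⟨by omega, by omega⟩)
  have hC₀ : ∀ m : ℤ, |(m:ℝ)| < a₀ → ‖dtnMult k R m‖ ≤ C₀ := by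
    intro m hm
    have h1 : |(m:ℝ)| ≤ (M:ℝ) := le_trans hm.le (Nat.le_ceil a₀)
    have h2 : |m| ≤ (M:ℤ) := by
      have h3 : ((|m| : ℤ) : ℝ) ≤ ((M:ℤ) : ℝ) := by
        rw [Int.cast_abs]
        exact_mod_cast h1
      exact_mod_cast h3
    rw [hC₀def]
    exact Finset.le_sup' (fun j => ‖dtnMult k R j‖)
      (Finset.mem_Icc.2 (abs_le.1 h2))
  refine ⟨2*K + C₀ + 1, by linarith, fun m => ?_⟩
  have hs0 : (0:ℝ) < 1 + (m:ℝ)^2 := by positivity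
  have hs : 0 < Real.sqrt (1 + (m:ℝ)^2) := Real.sqrt_pos.2 hs0
  have hsqrt1 : 1 ≤ Real.sqrt (1 + (m:ℝ)^2) := by
    rw [Real.le_sqrt one_pos.le hs0.le]
    nlinarith [sq_nonneg ((m:ℝ))]
  have hsqrt2 : 1 + |(m:ℝ)| ≤ 2 * Real.sqrt (1 + (m:ℝ)^2) := by
    have : (1 + |(m:ℝ)|)/2 ≤ Real.sqrt (1 + (m:ℝ)^2) := by
      rw [Real.le_sqrt (by positivity) hs0.le]
      nlinarith [sq_nonneg (|(m:ℝ)| - 1), sq_abs ((m:ℝ))]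
    linarith
  rcases le_or_gt a₀ |(m:ℝ)| with hcase | hcase
  · calc ‖dtnMult k R m‖ ≤ K * (1 + |(m:ℝ)|) := hKbound m hcase
      _ ≤ K * (2 * Real.sqrt (1 + (m:ℝ)^2)) := mul_le_mul_of_nonneg_left hsqrt2 hK.le
      _ ≤ (2*K + C₀ + 1) * Real.sqrt (1 + (m:ℝ)^2) := by nlinarith [hs.le, hC₀nonneg]
  · calc ‖dtnMult k R m‖ ≤ C₀ := hC₀ m hcase
      _ ≤ C₀ * Real.sqrt (1 + (m:ℝ)^2) := le_mul_of_one_le_right hC₀nonneg hsqrt1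
      _ ≤ (2*K + C₀ + 1) * Real.sqrt (1 + (m:ℝ)^2) := by nlinarith [hs.le, hK.le]

end DtNAuxSection

open Real Set MeasureTheory Filter Topology intervalIntegral in
/-- For `w ∈ H^{1/2}(Γ_R)` (i.e. `Σ_m (1+m²)^{1/2}|w_m|² < ∞`) the DtN series converges
in `H^{−1/2}(Γ_R)`, i.e. `Σ_m (1+m²)^{−1/2} |ζ_m|² |w_m|² < ∞`, and the DtN map `S` is a
bounded linear map from `H^{1/2}(Γ_R)` to `H^{−1/2}(Γ_R)`. -/
theorem dtn_bounded_H_half (k R : ℝ) (hk : 0 < k) (hR : 0 < R) :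
    (∀ w : ℤ → ℂ, Summable (fun m : ℤ => Real.sqrt (1 + (m : ℝ) ^ 2) * ‖w m‖ ^ 2) →
        Summable (fun m : ℤ =>
          (Real.sqrt (1 + (m : ℝ) ^ 2))⁻¹ * ‖dtnMult k R m‖ ^ 2 * ‖w m‖ ^ 2)) ∧
      ∃ C : ℝ, 0 < C ∧
        ∀ w : ℤ → ℂ, Summable (fun m : ℤ => Real.sqrt (1 + (m : ℝ) ^ 2) * ‖w m‖ ^ 2) →
          (∑' m : ℤ,
              (Real.sqrt (1 + (m : ℝ) ^ 2))⁻¹ * ‖dtnMult k R m‖ ^ 2 * ‖w m‖ ^ 2) ≤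
            C * ∑' m : ℤ, Real.sqrt (1 + (m : ℝ) ^ 2) * ‖w m‖ ^ 2 := by
  obtain ⟨C, hCpos, hC⟩ := mult_bound hk hR
  have key : ∀ (w : ℤ → ℂ) (m : ℤ),
      (Real.sqrt (1 + (m : ℝ) ^ 2))⁻¹ * ‖dtnMult k R m‖ ^ 2 * ‖w m‖ ^ 2 ≤
        C^2 * (Real.sqrt (1 + (m : ℝ) ^ 2) * ‖w m‖ ^ 2) := by
    intro w m
    have hs0 : (0:ℝ) < 1 + (m:ℝ)^2 := by positivity
    have hs : 0 < Real.sqrt (1 + (m:ℝ)^2) := Real.sqrt_pos.2 hs0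
    have h1 : ‖dtnMult k R m‖ ^ 2 ≤ C^2 * (1 + (m:ℝ)^2) := by
      have h2 := hC m
      have h3 := norm_nonneg (dtnMult k R m)
      nlinarith [Real.sq_sqrt hs0.le, Real.sqrt_nonneg (1 + (m:ℝ)^2)]
    have h4 : (Real.sqrt (1 + (m : ℝ) ^ 2))⁻¹ * (1 + (m:ℝ)^2) =
        Real.sqrt (1 + (m : ℝ) ^ 2) := by
      have h5 := Real.mul_self_sqrt hs0.le
      field_simp
      rw [Real.sq_sqrt hs0.le]
    calc (Real.sqrt (1 + (m : ℝ) ^ 2))⁻¹ * ‖dtnMult k R m‖ ^ 2 * ‖w m‖ ^ 2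
        ≤ (Real.sqrt (1 + (m : ℝ) ^ 2))⁻¹ * (C^2 * (1 + (m:ℝ)^2)) * ‖w m‖ ^ 2 := by
          apply mul_le_mul_of_nonneg_right
            (mul_le_mul_of_nonneg_left h1 (by positivity)) (by positivity)
      _ = C^2 * (Real.sqrt (1 + (m : ℝ) ^ 2) * ‖w m‖ ^ 2) := by
          rw [show (Real.sqrt (1 + (m : ℝ) ^ 2))⁻¹ * (C^2 * (1 + (m:ℝ)^2)) =
            C^2 * ((Real.sqrt (1 + (m : ℝ) ^ 2))⁻¹ * (1 + (m:ℝ)^2)) by ring, h4]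
          ring
  have hsummable : ∀ w : ℤ → ℂ,
      Summable (fun m : ℤ => Real.sqrt (1 + (m : ℝ) ^ 2) * ‖w m‖ ^ 2) →
      Summable (fun m : ℤ =>
        (Real.sqrt (1 + (m : ℝ) ^ 2))⁻¹ * ‖dtnMult k R m‖ ^ 2 * ‖w m‖ ^ 2) := by
    intro w hw
    apply Summable.of_nonneg_of_le (fun m => by positivity) (key w) (hw.mul_left (C^2))
  refine ⟨hsummable, C^2, pow_pos hCpos 2, fun w hw => ?_⟩
  calc (∑' m : ℤ, (Real.sqrt (1 + (m : ℝ) ^ 2))⁻¹ * ‖dtnMult k R m‖ ^ 2 * ‖w m‖ ^ 2)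
      ≤ ∑' m : ℤ, C^2 * (Real.sqrt (1 + (m : ℝ) ^ 2) * ‖w m‖ ^ 2) :=
        Summable.tsum_le_tsum (key w) (hsummable w hw) (hw.mul_left (C^2))
    _ = C^2 * ∑' m : ℤ, Real.sqrt (1 + (m : ℝ) ^ 2) * ‖w m‖ ^ 2 := tsum_mul_left
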